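/- Define R(a,b,c) := ((t·b − a)(t·a − q·b))/((a − q·b)(b − a)) · ((t·c − a)(t·a − q·c))/((a − q·c)(c − a)) · ((t·c − b)(t·b − q·c))/((b − q·c)(c − b)) and G(a,b,c) := (b/c) · ( R(a,b,c) − R(a,c,b) − R(b,c,a) + R(c,b,a) ), as elements of F(v₁,v₂,v₃) when evaluated at the variables. Then the full symmetrization vanishes: Σ_{σ ∈ S₃} G(v_{σ(1)}, v_{σ(2)}, v_{σ(3)}) = 0 in F(v₁,v₂,v₃). (This rational-function identity is the shuffle-algebra form of the Serre relation for the fundamental Macdonald currents.) -/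

import Mathlib

open scoped BigOperators

noncomputable section

/-- The field `F(x₁,…,x_N)` of rational functions in `N` variables over `F`. -/
abbrev RatF (F : Type) [Field F] (N : ℕ) : Type :=
  FractionRing (MvPolynomial (Fin N) F)

/-- The variable `xᵢ` viewed inside the rational function field. -/
noncomputable def Xv (F : Type) [Field F] (N : ℕ) (i : Fin N) : RatF F N :=
  algebraMap (MvPolynomial (Fin N) F) (RatF F N) (MvPolynomial.X i)

/-- The rational function
`R(a,b,c) = ((tb−a)(ta−qb))/((a−qb)(b−a)) · ((tc−a)(ta−qc))/((a−qc)(c−a)) ·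
((tc−b)(tb−qc))/((b−qc)(c−b))`. -/
noncomputable def Rfun (F : Type) [Field F] (q t : F) (a b c : RatF F 3) : RatF F 3 :=
  ((t • b - a) * (t • a - q • b)) / ((a - q • b) * (b - a)) *
    (((t • c - a) * (t • a - q • c)) / ((a - q • c) * (c - a))) *
    (((t • c - b) * (t • b - q • c)) / ((b - q • c) * (c - b)))

/-- `G(a,b,c) = (b/c)·(R(a,b,c) − R(a,c,b) − R(b,c,a) + R(c,b,a))`. -/
noncomputable def Gfun (F : Type) [Field F] (q t : F) (a b c : RatF F 3) : RatF F 3 :=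
  (b / c) * (Rfun F q t a b c - Rfun F q t a c b - Rfun F q t b c a + Rfun F q t c b a)

section Generic
variable {K : Type*} [Field K]

noncomputable def fg (Q T x y : K) : K := ((T*y - x)*(T*x - Q*y))/((x - Q*y)*(y - x))

lemma gdiffg (Q T x y : K) (h1 : x - Q*y ≠ 0) (h2 : y - Q*x ≠ 0) (h3 : y - x ≠ 0)
    (h4 : x - y ≠ 0) :
    fg Q T x y - fg Q T y x = ((T*y - x)*(T*x - Q*y)*(y - Q*x) + (T*x - y)*(T*y - Q*x)*(x - Q*y)) / ((x - Q*y)*(y - Q*x)*(y - x)) := by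
  rw [fg, fg, div_sub_div _ _ (mul_ne_zero h1 h3) (mul_ne_zero h2 h4),
    div_eq_div_iff (mul_ne_zero (mul_ne_zero h1 h3) (mul_ne_zero h2 h4))
      (mul_ne_zero (mul_ne_zero h1 h2) h3)]
  ring

lemma gdiffgN (Q T x y : K) (h1 : x - Q*y ≠ 0) (h2 : y - Q*x ≠ 0) (h3 : y - x ≠ 0)
    (h4 : x - y ≠ 0) :
    fg Q T x y - fg Q T y x = (-((T*y - x)*(T*x - Q*y)*(y - Q*x) + (T*x - y)*(T*y - Q*x)*(x - Q*y))) / ((x - Q*y)*(y - Q*x)*(x - y)) := by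
  rw [fg, fg, div_sub_div _ _ (mul_ne_zero h1 h3) (mul_ne_zero h2 h4),
    div_eq_div_iff (mul_ne_zero (mul_ne_zero h1 h3) (mul_ne_zero h2 h4))
      (mul_ne_zero (mul_ne_zero h1 h2) h4)]
  ring

lemma hdiffg (Q T a b c : K) (h1 : a - Q*b ≠ 0) (h2 : a - Q*c ≠ 0) (h3 : b - Q*a ≠ 0)
    (h4 : c - Q*a ≠ 0) (h5 : b - a ≠ 0) (h6 : c - a ≠ 0) (h7 : a - b ≠ 0) (h8 : a - c ≠ 0) :
    fg Q T a b * fg Q T a c - fg Q T b a * fg Q T c a = ((T*b - a)*(T*a - Q*b)*(T*c - a)*(T*a - Q*c)*((b - Q*a)*(c - Q*a)) - (T*a - b)*(T*b - Q*a)*(T*a - c)*(T*c - Q*a)*((a - Q*b)*(a - Q*c))) / ((a - Q*b)*(a - Q*c)*(b - Q*a)*(c - Q*a)*((b - a)*(c - a))) := by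
  have hD1 : (a - Q*b)*(b - a)*((a - Q*c)*(c - a)) ≠ 0 :=
    mul_ne_zero (mul_ne_zero h1 h5) (mul_ne_zero h2 h6)
  have hD2 : (b - Q*a)*(a - b)*((c - Q*a)*(a - c)) ≠ 0 :=
    mul_ne_zero (mul_ne_zero h3 h7) (mul_ne_zero h4 h8)
  have hM : ((a - Q*b)*(a - Q*c)*(b - Q*a)*(c - Q*a)*((b - a)*(c - a))) ≠ 0 :=
    mul_ne_zero (mul_ne_zero (mul_ne_zero (mul_ne_zero h1 h2) h3) h4) (mul_ne_zero h5 h6)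
  rw [fg, fg, fg, fg, div_mul_div_comm, div_mul_div_comm,
    div_sub_div _ _ hD1 hD2, div_eq_div_iff (mul_ne_zero hD1 hD2) hM]
  ring

lemma hdiffgN (Q T a b c : K) (h1 : a - Q*b ≠ 0) (h2 : a - Q*c ≠ 0) (h3 : b - Q*a ≠ 0)
    (h4 : c - Q*a ≠ 0) (h5 : b - a ≠ 0) (h6 : c - a ≠ 0) (h7 : a - b ≠ 0) (h8 : a - c ≠ 0) :
    fg Q T a b * fg Q T a c - fg Q T b a * fg Q T c a = (-((T*b - a)*(T*a - Q*b)*(T*c - a)*(T*a - Q*c)*((b - Q*a)*(c - Q*a)) - (T*a - b)*(T*b - Q*a)*(T*a - c)*(T*c - Q*a)*((a - Q*b)*(a - Q*c)))) / ((a - Q*b)*(a - Q*c)*(b - Q*a)*(c - Q*a)*((a - b)*(c - a))) := by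
  have hD1 : (a - Q*b)*(b - a)*((a - Q*c)*(c - a)) ≠ 0 :=
    mul_ne_zero (mul_ne_zero h1 h5) (mul_ne_zero h2 h6)
  have hD2 : (b - Q*a)*(a - b)*((c - Q*a)*(a - c)) ≠ 0 :=
    mul_ne_zero (mul_ne_zero h3 h7) (mul_ne_zero h4 h8)
  have hM : ((a - Q*b)*(a - Q*c)*(b - Q*a)*(c - Q*a)*((a - b)*(c - a))) ≠ 0 :=
    mul_ne_zero (mul_ne_zero (mul_ne_zero (mul_ne_zero h1 h2) h3) h4) (mul_ne_zero h7 h6)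
  rw [fg, fg, fg, fg, div_mul_div_comm, div_mul_div_comm,
    div_sub_div _ _ hD1 hD2, div_eq_div_iff (mul_ne_zero hD1 hD2) hM]
  ring

lemma hdiffgNN (Q T a b c : K) (h1 : a - Q*b ≠ 0) (h2 : a - Q*c ≠ 0) (h3 : b - Q*a ≠ 0)
    (h4 : c - Q*a ≠ 0) (h5 : b - a ≠ 0) (h6 : c - a ≠ 0) (h7 : a - b ≠ 0) (h8 : a - c ≠ 0) :
    fg Q T a b * fg Q T a c - fg Q T b a * fg Q T c a = ((T*b - a)*(T*a - Q*b)*(T*c - a)*(T*a - Q*c)*((b - Q*a)*(c - Q*a)) - (T*a - b)*(T*b - Q*a)*(T*a - c)*(T*c - Q*a)*((a - Q*b)*(a - Q*c))) / ((a - Q*b)*(a - Q*c)*(b - Q*a)*(c - Q*a)*((a - b)*(a - c))) := by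
  have hD1 : (a - Q*b)*(b - a)*((a - Q*c)*(c - a)) ≠ 0 :=
    mul_ne_zero (mul_ne_zero h1 h5) (mul_ne_zero h2 h6)
  have hD2 : (b - Q*a)*(a - b)*((c - Q*a)*(a - c)) ≠ 0 :=
    mul_ne_zero (mul_ne_zero h3 h7) (mul_ne_zero h4 h8)
  have hM : ((a - Q*b)*(a - Q*c)*(b - Q*a)*(c - Q*a)*((a - b)*(a - c))) ≠ 0 :=
    mul_ne_zero (mul_ne_zero (mul_ne_zero (mul_ne_zero h1 h2) h3) h4) (mul_ne_zero h7 h8)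
  rw [fg, fg, fg, fg, div_mul_div_comm, div_mul_div_comm,
    div_sub_div _ _ hD1 hD2, div_eq_div_iff (mul_ne_zero hD1 hD2) hM]
  ring

lemma gpairg (Q T x y z : K) (hy : y ≠ 0) (hz : z ≠ 0) :
    (y/z) * (fg Q T x y * fg Q T x z * fg Q T y z - fg Q T x z * fg Q T x y * fg Q T z y -
      fg Q T y z * fg Q T y x * fg Q T z x + fg Q T z y * fg Q T z x * fg Q T y x) +
    (z/y) * (fg Q T x z * fg Q T x y * fg Q T z y - fg Q T x y * fg Q T x z * fg Q T y z -
      fg Q T z y * fg Q T z x * fg Q T y x + fg Q T y z * fg Q T y x * fg Q T z x) =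
    ((y*y - z*z)/(y*z)) * (fg Q T y z - fg Q T z y) *
      (fg Q T x y * fg Q T x z - fg Q T y x * fg Q T z x) := by
  field_simp
  ring

lemma sum3g (Q T a b c : K) (ha : a ≠ 0) (hb : b ≠ 0) (hc : c ≠ 0)
    (h01 : a - b ≠ 0) (h02 : a - c ≠ 0) (h12 : b - c ≠ 0)
    (h10 : b - a ≠ 0) (h20 : c - a ≠ 0) (h21 : c - b ≠ 0)
    (g01 : a - Q*b ≠ 0) (g02 : a - Q*c ≠ 0) (g12 : b - Q*c ≠ 0)
    (g10 : b - Q*a ≠ 0) (g20 : c - Q*a ≠ 0) (g21 : c - Q*b ≠ 0) :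
    ((b*b - c*c)/(b*c)) * (((T*c - b)*(T*b - Q*c)*(c - Q*b) + (T*b - c)*(T*c - Q*b)*(b - Q*c))/((b - Q*c)*(c - Q*b)*(c - b))) * (((T*b - a)*(T*a - Q*b)*(T*c - a)*(T*a - Q*c)*((b - Q*a)*(c - Q*a)) - (T*a - b)*(T*b - Q*a)*(T*a - c)*(T*c - Q*a)*((a - Q*b)*(a - Q*c)))/((a - Q*b)*(a - Q*c)*(b - Q*a)*(c - Q*a)*((b - a)*(c - a)))) +
    ((a*a - c*c)/(a*c)) * (((T*c - a)*(T*a - Q*c)*(c - Q*a) + (T*a - c)*(T*c - Q*a)*(a - Q*c))/((a - Q*c)*(c - Q*a)*(c - a))) * ((-((T*a - b)*(T*b - Q*a)*(T*c - b)*(T*b - Q*c)*((a - Q*b)*(c - Q*b)) - (T*b - a)*(T*a - Q*b)*(T*b - c)*(T*c - Q*b)*((b - Q*a)*(b - Q*c))))/((b - Q*a)*(b - Q*c)*(a - Q*b)*(c - Q*b)*((b - a)*(c - b)))) +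
    ((b*b - a*a)/(b*a)) * ((-((T*a - b)*(T*b - Q*a)*(a - Q*b) + (T*b - a)*(T*a - Q*b)*(b - Q*a)))/((b - Q*a)*(a - Q*b)*(b - a))) * (((T*b - c)*(T*c - Q*b)*(T*a - c)*(T*c - Q*a)*((b - Q*c)*(a - Q*c)) - (T*c - b)*(T*b - Q*c)*(T*c - a)*(T*a - Q*c)*((c - Q*b)*(c - Q*a)))/((c - Q*b)*(c - Q*a)*(b - Q*c)*(a - Q*c)*((c - b)*(c - a)))) = 0 := by
  have hD : (((a*b)*c) * ((a - Q*b)*((a - Q*c)*((b - Q*a)*((b - Q*c)*((c - Q*a)*(c - Q*b)))))) * ((b - a)*((c - a)*(c - b)))) ≠ 0 := by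
    refine mul_ne_zero (mul_ne_zero (mul_ne_zero (mul_ne_zero ha hb) hc) ?_) ?_
    · exact mul_ne_zero g01 (mul_ne_zero g02 (mul_ne_zero g10 (mul_ne_zero g12
        (mul_ne_zero g20 g21))))
    · exact mul_ne_zero h10 (mul_ne_zero h20 h21)
  rw [div_mul_div_comm, div_mul_div_comm, div_mul_div_comm, div_mul_div_comm,
    div_mul_div_comm, div_mul_div_comm]
  rw [show (((b*b - c*c)*((T*c - b)*(T*b - Q*c)*(c - Q*b) + (T*b - c)*(T*c - Q*b)*(b - Q*c)))*((T*b - a)*(T*a - Q*b)*(T*c - a)*(T*a - Q*c)*((b - Q*a)*(c - Q*a)) - (T*a - b)*(T*b - Q*a)*(T*a - c)*(T*c - Q*a)*((a - Q*b)*(a - Q*c))))/(((b*c)*((b - Q*c)*(c - Q*b)*(c - b)))*((a - Q*b)*(a - Q*c)*(b - Q*a)*(c - Q*a)*((b - a)*(c - a)))) = (a*(((b*b - c*c)*((T*c - b)*(T*b - Q*c)*(c - Q*b) + (T*b - c)*(T*c - Q*b)*(b - Q*c)))*((T*b - a)*(T*a - Q*b)*(T*c - a)*(T*a - Q*c)*((b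 - Q*a)*(c - Q*a)) - (T*a - b)*(T*b - Q*a)*(T*a - c)*(T*c - Q*a)*((a - Q*b)*(a - Q*c)))))/(((a*b)*c) * ((a - Q*b)*((a - Q*c)*((b - Q*a)*((b - Q*c)*((c - Q*a)*(c - Q*b)))))) * ((b - a)*((c - a)*(c - b)))) from by
    rw [← mul_div_mul_left (((b*b - c*c)*((T*c - b)*(T*b - Q*c)*(c - Q*b) + (T*b - c)*(T*c - Q*b)*(b - Q*c)))*((T*b - a)*(T*a - Q*b)*(T*c - a)*(T*a - Q*c)*((b - Q*a)*(c - Q*a)) - (T*a - b)*(T*b - Q*a)*(T*a - c)*(T*c - Q*a)*((a - Q*b)*(a - Q*c)))) (((b*c)*((b - Q*c)*(c - Q*b)*(c - b)))*((a - Q*b)*(a - Q*c)*(b - Q*a)*(c - Q*a)*((b - a)*(c - a)))) ha]; congr 1; ring]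
  rw [show (((a*a - c*c)*((T*c - a)*(T*a - Q*c)*(c - Q*a) + (T*a - c)*(T*c - Q*a)*(a - Q*c)))*(-((T*a - b)*(T*b - Q*a)*(T*c - b)*(T*b - Q*c)*((a - Q*b)*(c - Q*b)) - (T*b - a)*(T*a - Q*b)*(T*b - c)*(T*c - Q*b)*((b - Q*a)*(b - Q*c)))))/(((a*c)*((a - Q*c)*(c - Q*a)*(c - a)))*((b - Q*a)*(b - Q*c)*(a - Q*b)*(c - Q*b)*((b - a)*(c - b)))) = (b*(((a*a - c*c)*((T*c - a)*(T*a - Q*c)*(c - Q*a) + (T*a - c)*(T*c - Q*a)*(a - Q*c)))*(-((T*a - b)*(T*b - Q*a)*(T*c - b)*(T*b - Q*c)*((a - Q*b)*(c - Q*b)) - (T*b - a)*(T*a - Q*b)*(T*b - c)*(T*c - Q*b)*((b - Q*a)*(b - Q*c))))))/(((a*b)*c) * ((a - Q*b)*((a - Q*c)*((b - Q*a)*((b - Q*c)*((c - Q*a)*(c - Q*b)))))) * ((b - a)*((c - a)*(c - b)))) from by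
    rw [← mul_div_mul_left (((a*a - c*c)*((T*c - a)*(T*a - Q*c)*(c - Q*a) + (T*a - c)*(T*c - Q*a)*(a - Q*c)))*(-((T*a - b)*(T*b - Q*a)*(T*c - b)*(T*b - Q*c)*((a - Q*b)*(c - Q*b)) - (T*b - a)*(T*a - Q*b)*(T*b - c)*(T*c - Q*b)*((b - Q*a)*(b - Q*c))))) (((a*c)*((a - Q*c)*(c - Q*a)*(c - a)))*((b - Q*a)*(b - Q*c)*(a - Q*b)*(c - Q*b)*((b - a)*(c - b)))) hb]; congr 1; ring]
  rw [show (((b*b - a*a)*(-((T*a - b)*(T*b - Q*a)*(a - Q*b) + (T*b - a)*(T*a - Q*b)*(b - Q*a))))*((T*b - c)*(T*c - Q*b)*(T*a - c)*(T*c - Q*a)*((b - Q*c)*(a - Q*c)) - (T*c - b)*(T*b - Q*c)*(T*c - a)*(T*a - Q*c)*((c - Q*b)*(c - Q*a))))/(((b*a)*((b - Q*a)*(a - Q*b)*(b - a)))*((c - Q*b)*(c - Q*a)*(b - Q*c)*(a - Q*c)*((c - b)*(c - a)))) = (c*(((b*b - a*a)*(-((T*a - b)*(T*b - Q*a)*(a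 - Q*b) + (T*b - a)*(T*a - Q*b)*(b - Q*a))))*((T*b - c)*(T*c - Q*b)*(T*a - c)*(T*c - Q*a)*((b - Q*c)*(a - Q*c)) - (T*c - b)*(T*b - Q*c)*(T*c - a)*(T*a - Q*c)*((c - Q*b)*(c - Q*a)))))/(((a*b)*c) * ((a - Q*b)*((a - Q*c)*((b - Q*a)*((b - Q*c)*((c - Q*a)*(c - Q*b)))))) * ((b - a)*((c - a)*(c - b)))) from by
    rw [← mul_div_mul_left (((b*b - a*a)*(-((T*a - b)*(T*b - Q*a)*(a - Q*b) + (T*b - a)*(T*a - Q*b)*(b - Q*a))))*((T*b - c)*(T*c - Q*b)*(T*a - c)*(T*c - Q*a)*((b - Q*c)*(a - Q*c)) - (T*c - b)*(T*b - Q*c)*(T*c - a)*(T*a - Q*c)*((c - Q*b)*(c - Q*a)))) (((b*a)*((b - Q*a)*(a - Q*b)*(b - a)))*((c - Q*b)*(c - Q*a)*(b - Q*c)*(a - Q*c)*((c - b)*(c - a)))) hc]; congr 1; ring]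
  rw [← add_div, ← add_div, div_eq_zero_iff]
  left
  ring

end Generic

lemma smul_eq_map (F : Type) [Field F] (r : F) (x : RatF F 3) :
    r • x = algebraMap (MvPolynomial (Fin 3) F) (RatF F 3) (MvPolynomial.C r) * x := by
  rw [Algebra.smul_def, IsScalarTower.algebraMap_apply F (MvPolynomial (Fin 3) F) (RatF F 3)]
  simp

lemma Gfun_eq (F : Type) [Field F] (q t : F) (x y z : RatF F 3) :
    Gfun F q t x y z =
      (y/z) * (fg (algebraMap (MvPolynomial (Fin 3) F) (RatF F 3) (MvPolynomial.C q)) (algebraMap (MvPolynomial (Fin 3) F) (RatF F 3) (MvPolynomial.C t)) x y * fg (algebraMap (MvPolynomial (Fin 3) F) (RatF F 3) (MvPolynomial.C q)) (algebraMap (MvPolynomial (Fin 3) F) (RatF F 3) (MvPolynomial.C t)) x z * fg (algebraMap (MvPolynomial (Fin 3) F) (RatF F 3) (MvPolynomial.C q)) (algebraMap (MvPolynomial (Fin 3) F) (RatF F 3) (MvPolynomial.C t)) y z -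
        fg (algebraMap (MvPolynomial (Fin 3) F) (RatF F 3) (MvPolynomial.C q)) (algebraMap (MvPolynomial (Fin 3) F) (RatF F 3) (MvPolynomial.C t)) x z * fg (algebraMap (MvPolynomial (Fin 3) F) (RatF F 3) (MvPolynomial.C q)) (algebraMap (MvPolynomial (Fin 3) F) (RatF F 3) (MvPolynomial.C t)) x y * fg (algebraMap (MvPolynomial (Fin 3) F) (RatF F 3) (MvPolynomial.C q)) (algebraMap (MvPolynomial (Fin 3) F) (RatF F 3) (MvPolynomial.C t)) z y -
        fg (algebraMap (MvPolynomial (Fin 3) F) (RatF F 3) (MvPolynomial.C q)) (algebraMap (MvPolynomial (Fin 3) F) (RatF F 3) (MvPolynomial.C t)) y z * fg (algebraMap (MvPolynomial (Fin 3) F) (RatF F 3) (MvPolynomial.C q)) (algebraMap (MvPolynomial (Fin 3) F) (RatF F 3) (MvPolynomial.C t)) y x * fg (algebraMap (MvPolynomial (Fin 3) F) (RatF F 3) (MvPolynomial.C q)) (algebraMap (MvPolynomial (Fin 3) F) (RatF F 3) (MvPolynomial.C t)) z x +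
        fg (algebraMap (MvPolynomial (Fin 3) F) (RatF F 3) (MvPolynomial.C q)) (algebraMap (MvPolynomial (Fin 3) F) (RatF F 3) (MvPolynomial.C t)) z y * fg (algebraMap (MvPolynomial (Fin 3) F) (RatF F 3) (MvPolynomial.C q)) (algebraMap (MvPolynomial (Fin 3) F) (RatF F 3) (MvPolynomial.C t)) z x * fg (algebraMap (MvPolynomial (Fin 3) F) (RatF F 3) (MvPolynomial.C q)) (algebraMap (MvPolynomial (Fin 3) F) (RatF F 3) (MvPolynomial.C t)) y x) := by
  simp only [Gfun, Rfun, fg, smul_eq_map]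

lemma Xv_ne_zero (F : Type) [Field F] (i : Fin 3) : Xv F 3 i ≠ 0 := by
  simp only [Xv, ne_eq, map_eq_zero_iff _ (IsFractionRing.injective _ _)]
  exact MvPolynomial.X_ne_zero i

lemma sub_mul_ne (F : Type) [Field F] (r : F) (i j : Fin 3) (h : i ≠ j) :
    Xv F 3 i - algebraMap (MvPolynomial (Fin 3) F) (RatF F 3) (MvPolynomial.C r) * Xv F 3 j
      ≠ 0 := by
  rw [Xv, Xv, ← map_mul, ← map_sub,
    ne_eq, map_eq_zero_iff _ (IsFractionRing.injective _ _)]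
  intro hp
  have := congrArg (MvPolynomial.eval (fun k => if k = i then (1:F) else 0)) hp
  simp [h.symm] at this

lemma sub_ne (F : Type) [Field F] (i j : Fin 3) (h : i ≠ j) :
    Xv F 3 i - Xv F 3 j ≠ 0 := by
  have := sub_mul_ne F 1 i j h
  simpa using this

theorem statement6 (F : Type) [Field F] [CharZero F] (q t : F) (hq : q ≠ 0) (ht : t ≠ 0) :
    ∑ σ : Equiv.Perm (Fin 3),
      Gfun F q t (Xv F 3 (σ 0)) (Xv F 3 (σ 1)) (Xv F 3 (σ 2)) = 0 := by
  rw [show (Finset.univ : Finset (Equiv.Perm (Fin 3))) =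
    {1, Equiv.swap 0 1, Equiv.swap 0 2, Equiv.swap 1 2,
     Equiv.swap 0 1 * Equiv.swap 1 2, Equiv.swap 1 2 * Equiv.swap 0 1} from by decide]
  rw [Finset.sum_insert (by decide), Finset.sum_insert (by decide),
    Finset.sum_insert (by decide), Finset.sum_insert (by decide),
    Finset.sum_insert (by decide), Finset.sum_singleton]
  simp only [show ((1 : Equiv.Perm (Fin 3)) 0) = 0 from by decide,
    show ((1 : Equiv.Perm (Fin 3)) 1) = 1 from by decide,
    show ((1 : Equiv.Perm (Fin 3)) 2) = 2 from by decide,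
    show ((Equiv.swap (0:Fin 3) 1) 0) = 1 from by decide,
    show ((Equiv.swap (0:Fin 3) 1) 1) = 0 from by decide,
    show ((Equiv.swap (0:Fin 3) 1) 2) = 2 from by decide,
    show ((Equiv.swap (0:Fin 3) 2) 0) = 2 from by decide,
    show ((Equiv.swap (0:Fin 3) 2) 1) = 1 from by decide,
    show ((Equiv.swap (0:Fin 3) 2) 2) = 0 from by decide,
    show ((Equiv.swap (1:Fin 3) 2) 0) = 0 from by decide,
    show ((Equiv.swap (1:Fin 3) 2) 1) = 2 from by decide,
    show ((Equiv.swap (1:Fin 3) 2) 2) = 1 from by decide,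
    show ((Equiv.swap (0:Fin 3) 1 * Equiv.swap 1 2 : Equiv.Perm (Fin 3)) 0) = 1 from by decide,
    show ((Equiv.swap (0:Fin 3) 1 * Equiv.swap 1 2 : Equiv.Perm (Fin 3)) 1) = 2 from by decide,
    show ((Equiv.swap (0:Fin 3) 1 * Equiv.swap 1 2 : Equiv.Perm (Fin 3)) 2) = 0 from by decide,
    show ((Equiv.swap (1:Fin 3) 2 * Equiv.swap 0 1 : Equiv.Perm (Fin 3)) 0) = 2 from by decide,
    show ((Equiv.swap (1:Fin 3) 2 * Equiv.swap 0 1 : Equiv.Perm (Fin 3)) 1) = 0 from by decide,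
    show ((Equiv.swap (1:Fin 3) 2 * Equiv.swap 0 1 : Equiv.Perm (Fin 3)) 2) = 1 from by decide]
  simp only [Gfun_eq]
  set a := Xv F 3 0 with ha'
  set b := Xv F 3 1 with hb'
  set c := Xv F 3 2 with hc'
  set Q := algebraMap (MvPolynomial (Fin 3) F) (RatF F 3) (MvPolynomial.C q) with hQ'
  set T := algebraMap (MvPolynomial (Fin 3) F) (RatF F 3) (MvPolynomial.C t) with hT'
  have n0 : a ≠ 0 := Xv_ne_zero F 0
  have n1 : b ≠ 0 := Xv_ne_zero F 1
  have n2 : c ≠ 0 := Xv_ne_zero F 2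
  have h01 : a - b ≠ 0 := sub_ne F 0 1 (by decide)
  have h02 : a - c ≠ 0 := sub_ne F 0 2 (by decide)
  have h12 : b - c ≠ 0 := sub_ne F 1 2 (by decide)
  have h10 : b - a ≠ 0 := sub_ne F 1 0 (by decide)
  have h20 : c - a ≠ 0 := sub_ne F 2 0 (by decide)
  have h21 : c - b ≠ 0 := sub_ne F 2 1 (by decide)
  have g01 : a - Q*b ≠ 0 := sub_mul_ne F q 0 1 (by decide)
  have g02 : a - Q*c ≠ 0 := sub_mul_ne F q 0 2 (by decide)
  have g12 : b - Q*c ≠ 0 := sub_mul_ne F q 1 2 (by decide)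
  have g10 : b - Q*a ≠ 0 := sub_mul_ne F q 1 0 (by decide)
  have g20 : c - Q*a ≠ 0 := sub_mul_ne F q 2 0 (by decide)
  have g21 : c - Q*b ≠ 0 := sub_mul_ne F q 2 1 (by decide)
  have p1 := gpairg Q T a b c n1 n2
  have p2 := gpairg Q T b a c n0 n2
  have p3 := gpairg Q T c b a n1 n0
  have sfinal := sum3g Q T a b c n0 n1 n2 h01 h02 h12 h10 h20 h21 g01 g02 g12 g10 g20 g21
  rw [← gdiffg Q T b c g12 g21 h21 h12, ← gdiffg Q T a c g02 g20 h20 h02,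
    ← gdiffgN Q T b a g10 g01 h01 h10,
    ← hdiffg Q T a b c g01 g02 g10 g20 h10 h20 h01 h02,
    ← hdiffgN Q T b a c g10 g12 g01 g21 h01 h21 h10 h12,
    ← hdiffgNN Q T c b a g21 g20 g12 g02 h12 h02 h21 h20] at sfinal
  linear_combination p1 + p2 + p3 + sfinal

end
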